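/- For any matrix P_d ∈ ℂ^{L×K} with K ≤ L, there exist matrices Θ ∈ ℂ^{2K×2K} and Φ ∈ ℂ^{(K+L)×(K+L)} that are both unitary and symmetric (Θ = Θᵀ, Φ = Φᵀ), and a diagonal matrix D ∈ ℝ^{K×K} with nonnegative entries, such that P_d = Φ₂₁ · D · Θ₂₁, where Θ₂₁ = Θ[K+1:2K, 1:K] and Φ₂₁ = Φ[K+1:K+L, 1:K] are the lower-left blocks. -/

import Mathlib

open Matrix

lemma transpose_conjT {m n : Type*} (M : Matrix m n ℂ) : (Mᵀ)ᴴ = (Mᴴ)ᵀ := by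
  ext i j; simp

/-- Build a symmetric unitary from a unitary V. -/
lemma milac_theta {K : ℕ} (V : Matrix (Fin K) (Fin K) ℂ)
    (h1 : Vᴴ * V = 1) (h2 : V * Vᴴ = 1) :
    (fromBlocks 0 ((Vᴴ)ᵀ) (Vᴴ) 0)ᴴ * (fromBlocks 0 ((Vᴴ)ᵀ) (Vᴴ) 0) = 1 ∧
    (fromBlocks 0 ((Vᴴ)ᵀ) (Vᴴ) 0) = (fromBlocks 0 ((Vᴴ)ᵀ) (Vᴴ) 0)ᵀ := by
  constructor
  · rw [fromBlocks_conjTranspose, fromBlocks_multiply, ← fromBlocks_one]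
    rw [fromBlocks_inj]
    refine ⟨?_, by simp, by simp, ?_⟩
    · simp [h2]
    · rw [transpose_conjT, conjTranspose_conjTranspose]
      simp only [conjTranspose_zero, Matrix.mul_zero, add_zero, Matrix.zero_mul, zero_add]
      rw [← transpose_mul, h1, transpose_one]
  · rw [fromBlocks_transpose, transpose_transpose, transpose_zero]

/-- Build a symmetric unitary with given lower-left block from two isometries. -/
lemma milac_phi {K L : ℕ} (U₁ : Matrix (Fin L) (Fin K) ℂ) (U₂ : Matrix (Fin L) (Fin (L - K)) ℂ)
    (h11 : U₁ᴴ * U₁ = 1) (h12 : U₁ᴴ * U₂ = 0) (h22 : U₂ᴴ * U₂ = 1)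
    (hfull : U₁ * U₁ᴴ + U₂ * U₂ᴴ = 1) :
    (fromBlocks 0 (U₁ᵀ) U₁ (-(U₂ * U₂ᵀ)))ᴴ * (fromBlocks 0 (U₁ᵀ) U₁ (-(U₂ * U₂ᵀ))) = 1 ∧
    (fromBlocks 0 (U₁ᵀ) U₁ (-(U₂ * U₂ᵀ))) = (fromBlocks 0 (U₁ᵀ) U₁ (-(U₂ * U₂ᵀ)))ᵀ := by
  have h21 : U₂ᴴ * U₁ = 0 := by
    have := congrArg conjTranspose h12
    simpa [conjTranspose_mul] using this
  constructor
  · rw [fromBlocks_conjTranspose, fromBlocks_multiply, ← fromBlocks_one, fromBlocks_inj]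
    have ht1 : (U₁ᵀ)ᴴ = (U₁ᴴ)ᵀ := transpose_conjT U₁
    refine ⟨by simp [h11], ?_, ?_, ?_⟩
    · simp only [conjTranspose_zero, Matrix.zero_mul, Matrix.mul_zero, zero_add, add_zero]
      rw [Matrix.mul_neg, ← Matrix.mul_assoc, h12]
      simp
    · simp only [conjTranspose_zero, Matrix.zero_mul, Matrix.mul_zero, zero_add, add_zero]
      rw [conjTranspose_neg, conjTranspose_mul, transpose_conjT,
        Matrix.neg_mul, Matrix.mul_assoc, h21]
      simp
    · rw [ht1, conjTranspose_neg, conjTranspose_mul, transpose_conjT,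
        Matrix.neg_mul, Matrix.mul_neg, neg_neg, Matrix.mul_assoc U₂ᴴᵀ,
        ← Matrix.mul_assoc U₂ᴴ, h22, Matrix.one_mul,
        ← transpose_mul, ← transpose_mul, ← transpose_add, hfull, transpose_one]
  · rw [fromBlocks_transpose, transpose_transpose, transpose_zero, transpose_neg,
      transpose_mul, transpose_transpose]

lemma milac_split {K L : ℕ} (U : Matrix (Fin L) (Fin L) ℂ) (hU : Uᴴ * U = 1)
    (U₁ : Matrix (Fin L) (Fin K) ℂ) (U₂ : Matrix (Fin L) (Fin (L - K)) ℂ)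
    (e : Fin K ⊕ Fin (L - K) ≃ Fin L)
    (h1 : ∀ i j, U₁ i j = U i (e (Sum.inl j))) (h2 : ∀ i j, U₂ i j = U i (e (Sum.inr j))) :
    U₁ᴴ * U₁ = 1 ∧ U₁ᴴ * U₂ = 0 ∧ U₂ᴴ * U₂ = 1 ∧ U₁ * U₁ᴴ + U₂ * U₂ᴴ = 1 := by
  have hcols : fromCols U₁ U₂ = U.submatrix id ⇑e := by
    ext i j
    cases j with
    | inl j => simp [h1 i j, submatrix_apply]
    | inr j => simp [h2 i j, submatrix_apply]
  have hUU : U * Uᴴ = 1 := mul_eq_one_comm.mp hU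
  have key1 : (fromCols U₁ U₂)ᴴ * fromCols U₁ U₂ = 1 := by
    rw [hcols, conjTranspose_submatrix]
    rw [show (id : Fin L → Fin L) = ⇑(Equiv.refl (Fin L)) from rfl]
    rw [submatrix_mul_equiv Uᴴ U ⇑e (Equiv.refl (Fin L)) ⇑e, hU, submatrix_one_equiv]
  have key2 : fromCols U₁ U₂ * (fromCols U₁ U₂)ᴴ = 1 := by
    rw [hcols, conjTranspose_submatrix]
    rw [submatrix_mul_equiv U Uᴴ id e id, hUU, submatrix_id_id]
  rw [conjTranspose_fromCols_eq_fromRows_conjTranspose, fromRows_mul_fromCols,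
    ← fromBlocks_one, fromBlocks_inj] at key1
  rw [conjTranspose_fromCols_eq_fromRows_conjTranspose, fromCols_mul_fromRows] at key2
  exact ⟨key1.1, key1.2.1, key1.2.2.2, key2⟩

lemma milac_extend {K L : ℕ} (hKL : K ≤ L) (W : Matrix (Fin L) (Fin K) ℂ) (σ : Fin K → ℝ)
    (hWW : ∀ a b : Fin K, (Wᴴ * W) a b = if a = b then ((σ a * σ a : ℝ) : ℂ) else 0) :
    ∃ (U₁ : Matrix (Fin L) (Fin K) ℂ) (U₂ : Matrix (Fin L) (Fin (L - K)) ℂ),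
      U₁ᴴ * U₁ = 1 ∧ U₁ᴴ * U₂ = 0 ∧ U₂ᴴ * U₂ = 1 ∧ U₁ * U₁ᴴ + U₂ * U₂ᴴ = 1 ∧
      U₁ * diagonal (fun j => (σ j : ℂ)) = W := by
  classical
  set E := EuclideanSpace ℂ (Fin L) with hE
  set wv : Fin K → E := fun j => (WithLp.equiv 2 (Fin L → ℂ)).symm (fun i => W i j) with hwv
  have hwv_apply : ∀ (j : Fin K) (i : Fin L), wv j i = W i j := fun j i => rfl
  have hWWsum : ∀ a b : Fin K, ∑ r, (starRingEnd ℂ) (W r a) * W r b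
      = if a = b then ((σ a * σ a : ℝ) : ℂ) else 0 := by
    intro a b
    have := hWW a b
    rwa [mul_apply] at this
  have hinner : ∀ a b : Fin K, (inner ℂ (wv a) (wv b) : ℂ)
      = if a = b then ((σ a * σ a : ℝ) : ℂ) else 0 := by
    intro a b
    rw [PiLp.inner_apply]
    simpa [RCLike.inner_apply, hwv_apply, mul_comm] using hWWsum a b
  set u : Fin K → E := fun j => ((σ j : ℂ)⁻¹) • wv j with hu
  set v : Fin L → E := fun i => if h : (i : ℕ) < K then u ⟨i, h⟩ else 0 with hv
  set s : Set (Fin L) := {i | ∃ h : (i : ℕ) < K, σ ⟨i, h⟩ ≠ 0} with hs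
  have hinneru : ∀ a b : Fin K, σ a ≠ 0 → σ b ≠ 0 →
      (inner ℂ (u a) (u b) : ℂ) = if a = b then 1 else 0 := by
    intro a b ha hb
    rw [hu]
    simp only [inner_smul_left, inner_smul_right, hinner a b]
    by_cases hab : a = b
    · subst hab
      simp only [if_pos rfl, ← Complex.ofReal_inv, Complex.conj_ofReal, if_true]
      norm_cast
      field_simp
    · simp [hab]
  have horth : Orthonormal ℂ (s.restrict v) := by
    rw [orthonormal_iff_ite]
    rintro ⟨i, hi⟩ ⟨j, hj⟩
    obtain ⟨hi', hσi⟩ := hi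
    obtain ⟨hj', hσj⟩ := hj
    have hvi : s.restrict v ⟨i, ⟨hi', hσi⟩⟩ = u ⟨i, hi'⟩ := by
      show v i = u ⟨i, hi'⟩
      simp only [hv, dif_pos hi']
    have hvj : s.restrict v ⟨j, ⟨hj', hσj⟩⟩ = u ⟨j, hj'⟩ := by
      show v j = u ⟨j, hj'⟩
      simp only [hv, dif_pos hj']
    rw [hvi, hvj, hinneru _ _ hσi hσj]
    by_cases hij : i = j
    · subst hij; simp
    · simp [Fin.mk_eq_mk, Subtype.mk_eq_mk, Fin.val_inj, hij]
  have hcard : Module.finrank ℂ E = Fintype.card (Fin L) := by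
    show Module.finrank ℂ (EuclideanSpace ℂ (Fin L)) = Fintype.card (Fin L)
    simp
  obtain ⟨b, hb⟩ := horth.exists_orthonormalBasis_extension_of_card_eq hcard
  set U : Matrix (Fin L) (Fin L) ℂ := Matrix.of fun i j => b j i with hUdef
  have hU : Uᴴ * U = 1 := by
    ext j k
    rw [mul_apply]
    have hbo := orthonormal_iff_ite.mp b.orthonormal j k
    rw [PiLp.inner_apply] at hbo
    simp only [RCLike.inner_apply] at hbo
    simp only [hUdef, conjTranspose_apply, Matrix.of_apply, RCLike.star_def]
    rw [one_apply, ← hbo]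
    exact Finset.sum_congr rfl fun _ _ => mul_comm _ _
  set e : Fin K ⊕ Fin (L - K) ≃ Fin L :=
    finSumFinEquiv.trans (finCongr (Nat.add_sub_cancel' hKL)) with he
  set U₁ : Matrix (Fin L) (Fin K) ℂ := Matrix.of fun i j => U i (e (Sum.inl j)) with hU₁
  set U₂ : Matrix (Fin L) (Fin (L - K)) ℂ := Matrix.of fun i j => U i (e (Sum.inr j)) with hU₂
  obtain ⟨k1, k2, k3, k4⟩ := milac_split U hU U₁ U₂ e (fun i j => rfl) (fun i j => rfl)
  refine ⟨U₁, U₂, k1, k2, k3, k4, ?_⟩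
  ext i j
  rw [mul_diagonal]
  have hval : ((e (Sum.inl j) : Fin L) : ℕ) = (j : ℕ) := by
    simp [he, finSumFinEquiv_apply_left]
  have hlt : ((e (Sum.inl j) : Fin L) : ℕ) < K := hval ▸ j.isLt
  have hfin : (⟨((e (Sum.inl j) : Fin L) : ℕ), hlt⟩ : Fin K) = j := Fin.ext hval
  by_cases hσ : σ j = 0
  · have hcol : (Wᴴ * W) j j = ((σ j * σ j : ℝ) : ℂ) := by rw [hWW j j, if_pos rfl]
    have hsum : ∑ r, (Complex.normSq (W r j) : ℂ) = ((σ j * σ j : ℝ) : ℂ) := by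
      rw [← hcol, mul_apply]
      congr 1
      ext r
      rw [conjTranspose_apply, RCLike.star_def, Complex.normSq_eq_conj_mul_self]
    have hsumR : ∑ r, Complex.normSq (W r j) = 0 := by
      have : ((∑ r, Complex.normSq (W r j) : ℝ) : ℂ) = ((0 : ℝ) : ℂ) := by
        push_cast
        rw [hsum, hσ]
        norm_num
      exact_mod_cast this
    have hW0 : W i j = 0 := by
      have := (Finset.sum_eq_zero_iff_of_nonneg
        (fun r _ => Complex.normSq_nonneg (W r j))).mp hsumR i (Finset.mem_univ i)
      exact Complex.normSq_eq_zero.mp this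
    simp [hσ, hW0]
  · have hmem : e (Sum.inl j) ∈ s := ⟨hlt, by rw [hfin]; exact hσ⟩
    have hbv := hb _ hmem
    have hveq : v (e (Sum.inl j)) = u j := by
      rw [hv]
      simp only [dif_pos hlt]
      rw [hfin]
    have hU₁v : U₁ i j = u j i := by
      rw [hU₁]
      show (b (e (Sum.inl j))) i = u j i
      rw [hbv, hveq]
    rw [hU₁v]
    have : u j i = ((σ j : ℂ))⁻¹ * W i j := by
      rw [hu]
      show ((σ j : ℂ))⁻¹ * (wv j i) = ((σ j : ℂ))⁻¹ * W i j
      rw [hwv_apply]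
    rw [this]
    have hσC : ((σ j : ℝ) : ℂ) ≠ 0 := by exact_mod_cast hσ
    field_simp
/-- Any fully digital beamformer can be realized by a two-layer lossless
reciprocal MiLAC architecture. -/
theorem two_layer_milac_realizes_any_digital_beamformer
    (K L : ℕ) (hKL : K ≤ L) (Pd : Matrix (Fin L) (Fin K) ℂ) :
    ∃ (Θ : Matrix (Fin K ⊕ Fin K) (Fin K ⊕ Fin K) ℂ)
      (Φ : Matrix (Fin K ⊕ Fin L) (Fin K ⊕ Fin L) ℂ)
      (D : Matrix (Fin K) (Fin K) ℝ),
      Θᴴ * Θ = 1 ∧ Θ = Θᵀ ∧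
      Φᴴ * Φ = 1 ∧ Φ = Φᵀ ∧
      D.IsDiag ∧ (∀ k, 0 ≤ D k k) ∧
      Pd = Φ.toBlocks₂₁ * D.map (Complex.ofReal) * Θ.toBlocks₂₁ := by
  classical
  have hA : (Pdᴴ * Pd).IsHermitian := isHermitian_conjTranspose_mul_self Pd
  set lam : Fin K → ℝ := hA.eigenvalues with hlam
  have hlam_nonneg : ∀ i, 0 ≤ lam i := fun i =>
    Matrix.eigenvalues_conjTranspose_mul_self_nonneg Pd i
  set V : Matrix (Fin K) (Fin K) ℂ := (hA.eigenvectorUnitary : Matrix (Fin K) (Fin K) ℂ)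
    with hVdef
  have hsV : star V * V = 1 := Matrix.mem_unitaryGroup_iff'.mp hA.eigenvectorUnitary.2
  have hVs : V * star V = 1 := Matrix.mem_unitaryGroup_iff.mp hA.eigenvectorUnitary.2
  have hV1 : Vᴴ * V = 1 := by rw [← Matrix.star_eq_conjTranspose]; exact hsV
  have hV2 : V * Vᴴ = 1 := by rw [← Matrix.star_eq_conjTranspose]; exact hVs
  set σ : Fin K → ℝ := fun j => Real.sqrt (lam j) with hσdef
  set W : Matrix (Fin L) (Fin K) ℂ := Pd * V with hWdef
  have hWWdiag : Wᴴ * W = diagonal (RCLike.ofReal ∘ lam) := by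
    have h1 : Wᴴ * W = Vᴴ * ((Pdᴴ * Pd) * V) := by
      rw [hWdef, conjTranspose_mul, Matrix.mul_assoc, ← Matrix.mul_assoc Pdᴴ Pd V]
    rw [h1, hA.spectral_theorem, Unitary.conjStarAlgAut_apply, Matrix.mul_assoc _ (star V) V, hsV, Matrix.mul_one,
      ← Matrix.mul_assoc, ← Matrix.star_eq_conjTranspose, hsV, Matrix.one_mul]
  have hWW : ∀ a b : Fin K, (Wᴴ * W) a b = if a = b then ((σ a * σ a : ℝ) : ℂ) else 0 := by
    intro a b
    rw [hWWdiag, diagonal_apply]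
    by_cases hab : a = b
    · subst hab
      rw [if_pos rfl, if_pos rfl]
      simp only [Function.comp_apply, hσdef]
      rw [Real.mul_self_sqrt (hlam_nonneg a)]
      rfl
    · rw [if_neg hab, if_neg hab]
  obtain ⟨U₁, U₂, k1, k2, k3, k4, k5⟩ := milac_extend hKL W σ hWW
  obtain ⟨hΘu, hΘs⟩ := milac_theta V hV1 hV2
  obtain ⟨hΦu, hΦs⟩ := milac_phi U₁ U₂ k1 k2 k3 k4
  refine ⟨fromBlocks 0 ((Vᴴ)ᵀ) (Vᴴ) 0, fromBlocks 0 (U₁ᵀ) U₁ (-(U₂ * U₂ᵀ)),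
    diagonal σ, hΘu, hΘs, hΦu, hΦs, isDiag_diagonal σ, ?_, ?_⟩
  · intro k
    rw [diagonal_apply_eq]
    exact Real.sqrt_nonneg _
  · rw [toBlocks_fromBlocks₂₁, toBlocks_fromBlocks₂₁]
    have hmap : (diagonal σ).map Complex.ofReal = diagonal (fun j => ((σ j : ℝ) : ℂ)) := by
      rw [diagonal_map (by simp)]
    rw [hmap, k5, hWdef, Matrix.mul_assoc, hV2, Matrix.mul_one]
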